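/- Let E be a directed graph and A = KE its path algebra over a field K. Then A is semiprime if and only if for every path μ in E there exists a path λ with s(λ) = r(μ) and r(λ) = s(μ); that is, every connected pair of vertices by a path admits a returning path. -/

import Mathlib

/-- A directed graph: vertices, edges, source and range maps. -/
structure DGraph : Type 1 where
  V : Type
  Edge : Type
  s : Edge → V
  r : Edge → V

namespace DGraph

/-- A list of edges is composable if consecutive edges match up. -/
def IsComposable (G : DGraph) (l : List G.Edge) : Prop :=
  l.Chain' (fun e f => G.r e = G.s f)

/-- A path in `G`: either a trivial path at a vertex, or a nonempty composable list of edges. -/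
def GPath (G : DGraph) : Type :=
  G.V ⊕ {l : List G.Edge // l ≠ [] ∧ G.IsComposable l}

namespace GPath

variable {G : DGraph}

/-- The source of a path. -/
def src : GPath G → G.V
  | Sum.inl v => v
  | Sum.inr l => G.s (l.1.head l.2.1)

/-- The range of a path. -/
def rng : GPath G → G.V
  | Sum.inl v => v
  | Sum.inr l => G.r (l.1.getLast l.2.1)

/-- The length of a path. -/
def length : GPath G → ℕ
  | Sum.inl _ => 0
  | Sum.inr l => l.1.length

/-- The trivial path at a vertex. -/
def ofVertex (v : G.V) : GPath G := Sum.inl v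

/-- The length-one path given by an edge. -/
def ofEdge (e : G.Edge) : GPath G :=
  Sum.inr ⟨[e], by refine ⟨by simp, ?_⟩; exact List.isChain_singleton e⟩

/-- Concatenation of composable paths. -/
def comp : (p q : GPath G) → p.rng = q.src → GPath G
  | Sum.inl _, q, _ => q
  | Sum.inr l, Sum.inl _, _ => Sum.inr l
  | Sum.inr l, Sum.inr m, h => Sum.inr ⟨l.1 ++ m.1, by
      refine ⟨by simp [l.2.1], l.2.2.append m.2.2 ?_⟩
      intro x hx y hy
      rw [List.getLast?_eq_some_getLast l.2.1] at hx
      rw [List.head?_eq_head m.2.1] at hy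
      cases hx
      cases hy
      exact h⟩

lemma src_comp (p q : GPath G) (h : p.rng = q.src) : (p.comp q h).src = p.src := by
  cases p with
  | inl v => simp only [comp]; exact h.symm
  | inr l =>
    cases q with
    | inl w => rfl
    | inr m => simp only [comp, src]; exact congrArg G.s (List.head_append_left l.2.1)

lemma rng_comp (p q : GPath G) (h : p.rng = q.src) : (p.comp q h).rng = q.rng := by
  cases p with
  | inl v => rfl
  | inr l =>
    cases q with
    | inl w => exact h
    | inr m => simp only [comp, rng]; exact congrArg G.r (List.getLast_append_right m.2.1)

lemma length_comp (p q : GPath G) (h : p.rng = q.src) :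
    (p.comp q h).length = p.length + q.length := by
  cases p with
  | inl v => simp [comp, length]
  | inr l =>
    cases q with
    | inl w => simp [comp, length]
    | inr m => simp [comp, length]

lemma inr_inj {l m : {l : List G.Edge // l ≠ [] ∧ G.IsComposable l}}
    (h : (Sum.inr l : GPath G) = Sum.inr m) : l.1 = m.1 := by
  cases Sum.inr_injective h; rfl

lemma length_eq_zero {p : GPath G} (h : p.length = 0) : ∃ v, p = Sum.inl v := by
  cases p with
  | inl v => exact ⟨v, rfl⟩
  | inr l => exact absurd (List.length_eq_zero_iff.mp h) l.2.1

/-- Key uniqueness lemma: if `p1 q p2 = p q p` with `|p1| = |p2| = |p|`, then `p1 = p, p2 = p`. -/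
lemma triple_eq {p p1 p2 q : GPath G} (h1 : p1.rng = q.src) (h2 : (p1.comp q h1).rng = p2.src)
    (h1' : p.rng = q.src) (h2' : (p.comp q h1').rng = p.src)
    (hl1 : p1.length = p.length) (hl2 : p2.length = p.length)
    (heq : (p1.comp q h1).comp p2 h2 = (p.comp q h1').comp p h2') :
    p1 = p ∧ p2 = p := by
  cases p with
  | inl v =>
    obtain ⟨v1, rfl⟩ := length_eq_zero hl1
    obtain ⟨v2, rfl⟩ := length_eq_zero hl2
    have a2 : q.rng = v2 := (rng_comp _ q h1).symm.trans h2
    have b2 : q.rng = v := (rng_comp _ q h1').symm.trans h2'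
    have a1 : v1 = v := h1.trans h1'.symm
    exact ⟨by rw [a1], by rw [a2.symm.trans b2]⟩
  | inr lp =>
    cases p1 with
    | inl v1 => exact absurd (List.length_eq_zero_iff.mp hl1.symm) lp.2.1
    | inr l1 =>
      cases p2 with
      | inl v2 => exact absurd (List.length_eq_zero_iff.mp hl2.symm) lp.2.1
      | inr l2 =>
        cases q with
        | inl w =>
          have hlist : l1.1 ++ l2.1 = lp.1 ++ lp.1 := inr_inj heq
          obtain ⟨e1, e2⟩ := List.append_inj hlist hl1
          exact ⟨congrArg Sum.inr (Subtype.ext e1), congrArg Sum.inr (Subtype.ext e2)⟩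
        | inr lq =>
          have hl1' : l1.1.length = lp.1.length := hl1
          have hlist : (l1.1 ++ lq.1) ++ l2.1 = (lp.1 ++ lq.1) ++ lp.1 := inr_inj heq
          obtain ⟨e1, e2⟩ := List.append_inj hlist (by simp [hl1'])
          obtain ⟨e1', -⟩ := List.append_inj e1 hl1
          exact ⟨congrArg Sum.inr (Subtype.ext e1'), congrArg Sum.inr (Subtype.ext e2)⟩

end GPath

end DGraph

open DGraph

/-- A realization of the path algebra of the graph `G` over the field `K`:
a `K`-algebra with a basis indexed by the paths of `G`, multiplying by concatenation. -/
structure PathAlgebraOn (K : Type) [Field K] (G : DGraph) (A : Type)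
    [NonUnitalRing A] [Module K A] where
  basis : Module.Basis (GPath G) K A
  mul_comp : ∀ (p q : GPath G) (h : p.rng = q.src),
      basis p * basis q = basis (p.comp q h)
  mul_ncomp : ∀ p q : GPath G, p.rng ≠ q.src → basis p * basis q = 0

/-- `KE` is semiprime iff every path admits a returning path. -/
theorem stmt14 (K : Type) [Field K] (G : DGraph)
    (A : Type) [NonUnitalRing A] [Module K A] [SMulCommClass K A A] [IsScalarTower K A A]
    (PA : PathAlgebraOn K G A) :
    (∀ a : A, (∀ b : A, a * b * a = 0) → a = 0) ↔
    (∀ p : GPath G, ∃ q : GPath G, q.src = p.rng ∧ q.rng = p.src) := by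
  constructor
  · -- semiprime → every path has a returning path
    intro hsp p
    by_contra hno
    push_neg at hno
    have hz : ∀ b : A, PA.basis p * b * PA.basis p = 0 := by
      have L0 : (LinearMap.mulRight K (PA.basis p)).comp (LinearMap.mulLeft K (PA.basis p))
          = (0 : A →ₗ[K] A) := by
        apply PA.basis.ext
        intro q
        simp only [LinearMap.coe_comp, Function.comp_apply, LinearMap.mulLeft_apply,
          LinearMap.mulRight_apply, LinearMap.zero_apply]
        by_cases h1 : p.rng = GPath.src q
        · rw [PA.mul_comp p q h1]
          refine PA.mul_ncomp _ _ ?_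
          rw [GPath.rng_comp]
          exact fun hr => hno q h1.symm hr
        · rw [PA.mul_ncomp p q h1, zero_mul]
      intro b
      simpa using LinearMap.congr_fun L0 b
    exact PA.basis.ne_zero p (hsp (PA.basis p) hz)
  · -- returning paths → semiprime
    intro hret a ha
    classical
    by_contra hne
    set c := PA.basis.repr a with hc
    have hcne : c ≠ 0 := fun h => hne (PA.basis.repr.map_eq_zero_iff.mp h)
    have hs : c.support.Nonempty := Finsupp.support_nonempty_iff.mpr hcne
    obtain ⟨p, hp, hmax⟩ := c.support.exists_max_image GPath.length hs
    obtain ⟨q, hq1, hq2⟩ := hret p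
    have h1' : p.rng = q.src := hq1.symm
    have h2' : (p.comp q h1').rng = p.src := by rw [GPath.rng_comp]; exact hq2
    set τ : GPath G := (p.comp q h1').comp p h2' with hτ
    have ha' : a = ∑ r ∈ c.support, c r • PA.basis r := by
      conv_lhs => rw [← PA.basis.linearCombination_repr a]
      rw [Finsupp.linearCombination_apply, Finsupp.sum]
    have expand : a * PA.basis q * a = ∑ r1 ∈ c.support, ∑ r2 ∈ c.support,
        (c r1 * c r2) • (PA.basis r1 * PA.basis q * PA.basis r2) := by
      conv_lhs => rw [ha']
      rw [Finset.sum_mul, Finset.sum_mul]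
      simp only [Finset.mul_sum, smul_mul_assoc, mul_smul_comm, smul_smul]
      exact Finset.sum_congr rfl fun r1 _ => Finset.sum_congr rfl fun r2 _ => by rw [mul_comm]
    have term_eval : ∀ r1 ∈ c.support, ∀ r2 ∈ c.support,
        PA.basis.repr (PA.basis r1 * PA.basis q * PA.basis r2) τ =
        if r1 = p ∧ r2 = p then 1 else 0 := by
      intro r1 h1m r2 h2m
      by_cases hc1 : r1.rng = q.src
      · rw [PA.mul_comp r1 q hc1]
        by_cases hc2 : (r1.comp q hc1).rng = r2.src
        · rw [PA.mul_comp _ _ hc2, PA.basis.repr_self, Finsupp.single_apply]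
          by_cases hx : (r1.comp q hc1).comp r2 hc2 = τ
          · have hlen := congrArg GPath.length hx
            rw [GPath.length_comp, GPath.length_comp, hτ, GPath.length_comp,
              GPath.length_comp] at hlen
            have hle1 := hmax r1 h1m
            have hle2 := hmax r2 h2m
            obtain ⟨ea, eb⟩ := GPath.triple_eq hc1 hc2 h1' h2' (by omega) (by omega) hx
            simp [hx, ea, eb, hτ]
          · rw [if_neg hx, if_neg]
            rintro ⟨rfl, rfl⟩
            exact hx rfl
        · rw [PA.mul_ncomp _ _ hc2, map_zero, Finsupp.coe_zero, Pi.zero_apply, if_neg]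
          rintro ⟨rfl, rfl⟩
          exact hc2 h2'
      · rw [PA.mul_ncomp _ _ hc1, zero_mul, map_zero, Finsupp.coe_zero, Pi.zero_apply, if_neg]
        rintro ⟨rfl, rfl⟩
        exact hc1 h1'
    have hrepr : PA.basis.repr (a * PA.basis q * a) τ = c p * c p := by
      rw [expand]
      rw [map_sum]
      rw [Finsupp.finset_sum_apply]
      have step : ∀ r1 ∈ c.support, (PA.basis.repr (∑ r2 ∈ c.support,
          (c r1 * c r2) • (PA.basis r1 * PA.basis q * PA.basis r2))) τ =
          ∑ r2 ∈ c.support, (c r1 * c r2) *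
            PA.basis.repr (PA.basis r1 * PA.basis q * PA.basis r2) τ := by
        intro r1 _
        rw [map_sum, Finsupp.finset_sum_apply]
        refine Finset.sum_congr rfl fun r2 _ => ?_
        rw [map_smul, Finsupp.smul_apply, smul_eq_mul]
      rw [Finset.sum_congr rfl step]
      rw [Finset.sum_congr rfl (fun r1 h1 => Finset.sum_congr rfl
        (fun r2 h2 => by rw [term_eval r1 h1 r2 h2]))]
      rw [Finset.sum_eq_single p]
      · rw [Finset.sum_eq_single p]
        · simp
        · intro r2 _ hne2
          simp [hne2]
        · intro h; exact absurd hp h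
      · intro r1 _ hne1
        exact Finset.sum_eq_zero fun r2 _ => by simp [hne1]
      · intro h; exact absurd hp h
    rw [ha (PA.basis q), map_zero, Finsupp.coe_zero, Pi.zero_apply] at hrepr
    exact mul_ne_zero (Finsupp.mem_support_iff.mp hp) (Finsupp.mem_support_iff.mp hp) hrepr.symm
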